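/- Let A be a real symmetric n×n matrix with λₙ(A) = 0 and spectral spread ρ, and suppose β > 18n³ρ/(n−1). Then every local minimizer y of f(z) = (1/2) zᵀAz + (β/2)‖z‖₄⁴ on the real unit sphere satisfies f(y) − min_{‖z‖=1} f(z) ≤ (1/(18n)) · min_{‖z‖=1} f(z). -/

import Mathlib

open Matrix Finset Filter Topology

lemma second_order_test {g g' : ℝ → ℝ} {c : ℝ}
    (h0 : IsLocalMin g 0) (hd : ∀ t, HasDerivAt g (g' t) t)
    (hd2 : HasDerivAt g' c 0) : g' 0 = 0 ∧ 0 ≤ c := by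
  have hg'0 : g' 0 = 0 := h0.hasDerivAt_eq_zero (hd 0)
  refine ⟨hg'0, ?_⟩
  by_contra hc
  push_neg at hc
  have hslope : Tendsto (slope g' 0) (𝓝[≠] 0) (𝓝 c) :=
    hasDerivAt_iff_tendsto_slope.mp hd2
  have hev : ∀ᶠ t in 𝓝[≠] (0:ℝ), slope g' 0 t < 0 :=
    hslope.eventually (eventually_lt_nhds hc)
  have hev' : ∀ᶠ t in 𝓝[>] (0:ℝ), g' t < 0 := by
    have hle : 𝓝[>] (0:ℝ) ≤ 𝓝[≠] 0 := nhdsWithin_mono _ (fun x hx => ne_of_gt hx)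
    filter_upwards [hle hev, self_mem_nhdsWithin] with t ht ht0
    have htp : (0:ℝ) < t := ht0
    have hsl : slope g' 0 t = g' t / t := by
      simp [slope, hg'0, div_eq_inv_mul]
    rw [hsl] at ht
    by_contra hge
    push_neg at hge
    have : 0 ≤ g' t / t := div_nonneg hge htp.le
    linarith
  obtain ⟨δ, hδ0, hδ⟩ := (nhdsGT_basis (0:ℝ)).eventually_iff.mp hev'
  obtain ⟨ε, hε0, hε⟩ := Metric.eventually_nhds_iff.mp
    (h0.filter_mono (le_refl _) : ∀ᶠ t in 𝓝 (0:ℝ), g 0 ≤ g t)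
  set r := min δ ε / 2 with hr
  have hmin0 : 0 < min δ ε := lt_min hδ0 hε0
  have hr0 : 0 < r := by positivity
  have hrδ : r < δ := lt_of_lt_of_le (half_lt_self hmin0) (min_le_left _ _)
  have hrε : r < ε := lt_of_lt_of_le (half_lt_self hmin0) (min_le_right _ _)
  have hcont : Continuous g := Differentiable.continuous (fun t => (hd t).differentiableAt)
  have hanti : StrictAntiOn g (Set.Icc 0 r) := by
    apply strictAntiOn_of_deriv_neg (convex_Icc _ _) hcont.continuousOn
    intro x hx
    rw [interior_Icc] at hx
    rw [(hd x).deriv]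
    exact hδ ⟨hx.1, lt_trans hx.2 hrδ⟩
  have h1 : g r < g 0 := hanti (Set.left_mem_Icc.mpr hr0.le) (Set.right_mem_Icc.mpr hr0.le) hr0
  have h2 : g 0 ≤ g r := by
    apply hε
    simpa [Real.dist_eq, abs_of_pos hr0] using hrε
  linarith

section
variable {n : ℕ}

lemma tangent_conds (A : Matrix (Fin n) (Fin n) ℝ)
    (hAs : ∀ u w : Fin n → ℝ, u ⬝ᵥ A.mulVec w = w ⬝ᵥ A.mulVec u) (β : ℝ)
    (f : (Fin n → ℝ) → ℝ)
    (hf : f = fun w => (1 / 2) * (w ⬝ᵥ A.mulVec w) + (β / 2) * ∑ k, w k ^ 4)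
    (y : Fin n → ℝ) (hy : ∑ k, y k ^ 2 = 1)
    (hmin : IsLocalMinOn f {w | ∑ k, w k ^ 2 = 1} y)
    (v : Fin n → ℝ) (hv : ∑ k, v k ^ 2 = 1) (hvy : ∑ k, y k * v k = 0) :
    (y ⬝ᵥ A.mulVec v + 2*β*∑ k, (y k)^3 * v k = 0) ∧
    (0 ≤ v ⬝ᵥ A.mulVec v - y ⬝ᵥ A.mulVec y
        + β*(6*∑ k, (y k)^2*(v k)^2 - 2*∑ k, (y k)^4)) := by
  set γ : ℝ → (Fin n → ℝ) := fun t => fun k => Real.cos t * y k + Real.sin t * v k with hγ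
  have hγ0 : γ 0 = y := by funext k; simp [hγ]
  have hγS : ∀ t, γ t ∈ {w : Fin n → ℝ | ∑ k, w k ^ 2 = 1} := by
    intro t
    have hexp : ∀ k, (Real.cos t * y k + Real.sin t * v k)^2
        = Real.cos t^2 * (y k)^2 + (2*Real.cos t*Real.sin t) * (y k * v k)
          + Real.sin t^2 * (v k)^2 := by intro k; ring
    simp only [Set.mem_setOf_eq, hγ]
    calc ∑ k, (Real.cos t * y k + Real.sin t * v k)^2
        = ∑ k, (Real.cos t^2 * (y k)^2 + (2*Real.cos t*Real.sin t) * (y k * v k)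
          + Real.sin t^2 * (v k)^2) := Finset.sum_congr rfl (fun k _ => hexp k)
      _ = Real.cos t^2 * ∑ k, (y k)^2 + (2*Real.cos t*Real.sin t) * ∑ k, (y k * v k)
          + Real.sin t^2 * ∑ k, (v k)^2 := by
            rw [Finset.sum_add_distrib, Finset.sum_add_distrib, ← Finset.mul_sum,
              ← Finset.mul_sum, ← Finset.mul_sum]
      _ = 1 := by rw [hy, hv, hvy]; simp [Real.cos_sq_add_sin_sq]
  set g : ℝ → ℝ := fun t => (1/2)*(Real.cos t^2*(y ⬝ᵥ A.mulVec y)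
      + 2*(Real.cos t*Real.sin t)*(y ⬝ᵥ A.mulVec v)
      + Real.sin t^2*(v ⬝ᵥ A.mulVec v))
      + (β/2) * ∑ k, (Real.cos t * y k + Real.sin t * v k)^4 with hg
  have hfγ : ∀ t, f (γ t) = g t := by
    intro t
    have hγsmul : γ t = Real.cos t • y + Real.sin t • v := by funext k; simp [hγ]
    have expand : (Real.cos t • y + Real.sin t • v) ⬝ᵥ A.mulVec (Real.cos t • y + Real.sin t • v)
        = Real.cos t^2*(y ⬝ᵥ A.mulVec y) + 2*(Real.cos t*Real.sin t)*(y ⬝ᵥ A.mulVec v)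
          + Real.sin t^2*(v ⬝ᵥ A.mulVec v) := by
      rw [mulVec_add, mulVec_smul, mulVec_smul, dotProduct_add, add_dotProduct, add_dotProduct]
      simp only [dotProduct_smul, smul_dotProduct, smul_eq_mul]
      rw [hAs v y]
      ring
    rw [hf, hg]
    simp only [hγsmul, expand]
    have : ∀ k, (Real.cos t • y + Real.sin t • v) k = Real.cos t * y k + Real.sin t * v k := by
      intro k; simp
    simp only [this]
  have hglocal : IsLocalMin g 0 := by
    have hcont : Continuous γ := by
      apply continuous_pi
      intro k
      exact ((Real.continuous_cos.mul continuous_const).add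
        (Real.continuous_sin.mul continuous_const))
    have htend : Tendsto γ (𝓝 0) (𝓝[{w : Fin n → ℝ | ∑ k, w k ^ 2 = 1}] y) := by
      rw [tendsto_nhdsWithin_iff]
      refine ⟨?_, Eventually.of_forall hγS⟩
      have := hcont.tendsto 0
      rwa [hγ0] at this
    have hev : ∀ᶠ t in 𝓝 (0:ℝ), f y ≤ f (γ t) := htend.eventually hmin
    have hg0 : g 0 = f y := by rw [← hfγ 0, hγ0]
    filter_upwards [hev] with t ht
    rw [hg0, ← hfγ t]
    exact ht
  clear hfγ hγS hγ0 hmin hf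
  set Q := y ⬝ᵥ A.mulVec y
  set B := y ⬝ᵥ A.mulVec v
  set R := v ⬝ᵥ A.mulVec v
  set g' : ℝ → ℝ := fun t => (1/2)*(2*Real.cos t*(-Real.sin t)*Q
      + 2*((-Real.sin t)*Real.sin t + Real.cos t*Real.cos t)*B
      + 2*Real.sin t*Real.cos t*R)
      + (β/2) * ∑ k, (4*(Real.cos t*y k + Real.sin t*v k)^3*(-Real.sin t*y k + Real.cos t*v k))
    with hg'
  have hd : ∀ t, HasDerivAt g (g' t) t := by
    intro t
    have hc := Real.hasDerivAt_cos t
    have hs := Real.hasDerivAt_sin t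
    have hsum : HasDerivAt (fun t => ∑ k, (Real.cos t*y k + Real.sin t*v k)^4)
        (∑ k, (4*(Real.cos t*y k + Real.sin t*v k)^3*(-Real.sin t*y k + Real.cos t*v k))) t := by
      apply HasDerivAt.fun_sum
      intro k _
      have hφ : HasDerivAt (fun t => Real.cos t*y k + Real.sin t*v k)
          (-Real.sin t*y k + Real.cos t*v k) t :=
        (hc.mul_const (y k)).fun_add (hs.mul_const (v k))
      convert! hφ.fun_pow 4 using 1
      all_goals push_cast
      all_goals ring
    have h1 : HasDerivAt (fun t => Real.cos t^2*Q) (2*Real.cos t*(-Real.sin t)*Q) t := by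
      convert! (hc.fun_pow 2).mul_const Q using 1
      all_goals push_cast
      all_goals ring
    have h2 : HasDerivAt (fun t => 2*(Real.cos t*Real.sin t)*B)
        (2*((-Real.sin t)*Real.sin t + Real.cos t*Real.cos t)*B) t := by
      convert! ((hc.fun_mul hs).const_mul 2).mul_const B using 1
      all_goals ring
    have h3 : HasDerivAt (fun t => Real.sin t^2*R) (2*Real.sin t*Real.cos t*R) t := by
      convert! (hs.fun_pow 2).mul_const R using 1
      all_goals push_cast
      all_goals ring
    have hquad := ((h1.fun_add h2).fun_add h3).const_mul ((1:ℝ)/2)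
    have htot := hquad.fun_add (hsum.const_mul (β/2))
    rw [hg, hg']
    convert! htot using 1
  have hd2 : HasDerivAt g' (R - Q + β*(6*∑ k, (y k)^2*(v k)^2 - 2*∑ k, (y k)^4)) 0 := by
    have hc := Real.hasDerivAt_cos 0
    have hs := Real.hasDerivAt_sin 0
    have hT1 : HasDerivAt (fun t => 2*Real.cos t*(-Real.sin t)*Q) (-2*Q) 0 := by
      convert! (((hc.const_mul 2).fun_mul hs.fun_neg).mul_const Q) using 1
      all_goals simp
    have hT2 : HasDerivAt (fun t => 2*((-Real.sin t)*Real.sin t + Real.cos t*Real.cos t)*B)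
        ((0:ℝ)) 0 := by
      convert! (((hs.fun_neg.fun_mul hs).fun_add (hc.fun_mul hc)).const_mul 2).mul_const B using 1
      all_goals simp
    have hT3 : HasDerivAt (fun t => 2*Real.sin t*Real.cos t*R) (2*R) 0 := by
      convert! (((hs.const_mul 2).fun_mul hc).mul_const R) using 1
      all_goals simp
    have hsum2 : HasDerivAt
        (fun t => ∑ k, (4*(Real.cos t*y k + Real.sin t*v k)^3*(-Real.sin t*y k + Real.cos t*v k)))
        (∑ k, (12*(y k)^2*(v k)^2 - 4*(y k)^4)) 0 := by
      apply HasDerivAt.fun_sum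
      intro k _
      have hφ : HasDerivAt (fun t => Real.cos t*y k + Real.sin t*v k)
          ((-Real.sin 0)*y k + Real.cos 0*v k) 0 := (hc.mul_const (y k)).fun_add (hs.mul_const (v k))
      have hφ' : HasDerivAt (fun t => -Real.sin t*y k + Real.cos t*v k)
          ((-Real.cos 0)*y k + (-Real.sin 0)*v k) 0 :=
        (hs.fun_neg.mul_const (y k)).fun_add (hc.mul_const (v k))
      have hcube : HasDerivAt (fun t => 4*(Real.cos t*y k + Real.sin t*v k)^3)
          (4*(3*(Real.cos 0*y k + Real.sin 0*v k)^2*((-Real.sin 0)*y k + Real.cos 0*v k))) 0 := by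
        convert! (hφ.fun_pow 3).const_mul 4 using 1
        all_goals push_cast
        all_goals ring
      have := hcube.fun_mul hφ'
      convert! this using 1
      all_goals simp only [Real.cos_zero, Real.sin_zero]
      all_goals ring
    have htot := (((hT1.fun_add hT2).fun_add hT3).const_mul ((1:ℝ)/2)).fun_add (hsum2.const_mul (β/2))
    convert! htot using 1
    rw [Finset.sum_sub_distrib]
    have e1 : ∑ x, 12*(y x)^2*(v x)^2 = 12*∑ x, (y x)^2*(v x)^2 := by
      rw [Finset.mul_sum]; exact Finset.sum_congr rfl fun _ _ => by ring
    have e2 : ∑ x, 4*(y x)^4 = 4*∑ x, (y x)^4 := by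
      rw [Finset.mul_sum]
    rw [e1, e2]
    ring
  obtain ⟨hFO, hSO⟩ := second_order_test hglocal hd hd2
  constructor
  · rw [hg'] at hFO
    simp only [Real.cos_zero, Real.sin_zero] at hFO
    have hsum4 : ∑ k, (4*((1:ℝ)*y k + 0*v k)^3*(-0*y k + 1*v k)) = 4*∑ k, (y k)^3*v k := by
      rw [Finset.mul_sum]; exact Finset.sum_congr rfl fun k _ => by ring
    rw [hsum4] at hFO
    nlinarith [hFO]
  · exact hSO

end


section
variable {n : ℕ}

lemma spectral_facts (A : Matrix (Fin n) (Fin n) ℝ) (hA : A.IsHermitian)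
    (lam : Fin n → ℝ) (hlam : lam = hA.eigenvalues) :
    ∀ z : Fin n → ℝ, ∃ w : Fin n → ℝ,
      z ⬝ᵥ A.mulVec z = ∑ i, lam i * w i ^ 2 ∧
      (∑ k, z k ^ 2) = ∑ i, w i ^ 2 ∧
      (A.mulVec z) ⬝ᵥ (A.mulVec z) = ∑ i, (lam i)^2 * w i ^ 2 := by
  intro z
  set U : Matrix (Fin n) (Fin n) ℝ := (hA.eigenvectorUnitary : Matrix (Fin n) (Fin n) ℝ) with hU
  have hUU : star U * U = 1 := Unitary.coe_star_mul_self hA.eigenvectorUnitary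
  have hUU' : U * star U = 1 := Unitary.coe_mul_star_self hA.eigenvectorUnitary
  have hstar : star U = Uᵀ := by
    rw [Matrix.star_eq_conjTranspose]; ext i j; simp [Matrix.conjTranspose_apply]
  set w : Fin n → ℝ := z ᵥ* U with hw
  have hwz : star U *ᵥ z = w := by rw [hstar, mulVec_transpose, hw]
  have horth : ∀ x : Fin n → ℝ, (U *ᵥ x) ⬝ᵥ (U *ᵥ x) = x ⬝ᵥ x := by
    intro x
    rw [dotProduct_mulVec, ← vecMul_transpose, vecMul_vecMul, ← hstar, hUU, vecMul_one]
  have hdiag : A = U * (diagonal lam) * star U := by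
    rw [hlam]; simpa using hA.spectral_theorem
  have hzw : z = U *ᵥ w := by
    rw [← hwz, mulVec_mulVec, hUU', one_mulVec]
  have hAz : A.mulVec z = U *ᵥ (fun i => lam i * w i) := by
    rw [hdiag, ← mulVec_mulVec, hwz]
    ext i; simp [mulVec, dotProduct, Matrix.mul_diagonal, mul_assoc]
  have hsq : ∀ v : Fin n → ℝ, v ⬝ᵥ v = ∑ i, v i ^ 2 := by
    intro v; simp [dotProduct, sq]
  refine ⟨w, ?_, ?_, ?_⟩
  · rw [hAz, dotProduct_mulVec, ← hw, dotProduct]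
    exact Finset.sum_congr rfl (by intro i _; ring)
  · rw [← hsq, ← hsq, hzw, horth]
  · rw [hAz, horth, dotProduct]
    exact Finset.sum_congr rfl (by intro i _; ring)

lemma pair_sum {k l : Fin n} (hkl : k ≠ l) (a b : ℝ) (F : Fin n → ℝ) :
    ∑ j, F j * (if j = k then a else if j = l then b else 0) = F k * a + F l * b := by
  have hpt : ∀ j, F j * (if j = k then a else if j = l then b else 0)
      = (if j = k then F j * a else 0) + (if j = l then F j * b else 0) := by
    intro j
    by_cases h1 : j = k
    · subst h1
      simp [hkl]
    · by_cases h2 : j = l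
      · subst h2; simp [h1, Ne.symm hkl]
      · simp [h1, h2]
  rw [Finset.sum_congr rfl (fun j _ => hpt j), Finset.sum_add_distrib]
  simp

end

set_option maxHeartbeats 2000000 in
theorem stmt17 {n : ℕ} (hn : 2 ≤ n) (A : Matrix (Fin n) (Fin n) ℝ) (hA : A.IsHermitian)
    (ρ β : ℝ)
    (hρ : ρ = (⨆ i, hA.eigenvalues i) - (⨅ i, hA.eigenvalues i))
    (hlamn : (⨅ i, hA.eigenvalues i) = 0)
    (hβ : 18 * (n : ℝ) ^ 3 * ρ / ((n : ℝ) - 1) < β)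
    (f : (Fin n → ℝ) → ℝ)
    (hf : f = fun w => (1 / 2) * (w ⬝ᵥ A.mulVec w) + (β / 2) * ∑ k, w k ^ 4)
    (y : Fin n → ℝ) (hy : ∑ k, y k ^ 2 = 1)
    (hmin : IsLocalMinOn f {w | ∑ k, w k ^ 2 = 1} y) :
    f y - sInf (f '' {w | ∑ k, w k ^ 2 = 1}) ≤
      (1 / (18 * (n : ℝ))) * sInf (f '' {w | ∑ k, w k ^ 2 = 1}) := by
  have hN2 : (2:ℝ) ≤ (n:ℝ) := by exact_mod_cast hn
  have hN0 : (0:ℝ) < (n:ℝ) := by linarith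
  have hN1 : (0:ℝ) < (n:ℝ) - 1 := by linarith
  haveI : Nontrivial (Fin n) := Fin.nontrivial_iff_two_le.mpr hn
  -- eigenvalue bounds
  have hlam_lb : ∀ i, 0 ≤ hA.eigenvalues i := by
    intro i
    rw [← hlamn]
    exact ciInf_le (Finite.bddBelow_range _) i
  have hlam_ub : ∀ i, hA.eigenvalues i ≤ ρ := by
    intro i
    rw [hρ, hlamn, sub_zero]
    exact le_ciSup (Finite.bddAbove_range _) i
  have hρ0 : 0 ≤ ρ := le_trans (hlam_lb ⟨0, by omega⟩) (hlam_ub ⟨0, by omega⟩)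
  have hβpos : 0 < β := by
    refine lt_of_le_of_lt (div_nonneg ?_ (by linarith)) hβ
    have h3 : (0:ℝ) ≤ (n:ℝ)^3 := by positivity
    nlinarith
  have hβ' : 18*(n:ℝ)^3*ρ < β*((n:ℝ)-1) := by
    rw [div_lt_iff₀ hN1] at hβ; linarith
  -- quadratic form facts
  have hquad0 : ∀ z : Fin n → ℝ, 0 ≤ z ⬝ᵥ A.mulVec z := by
    intro z; obtain ⟨w, h1, h2, h3⟩ := spectral_facts A hA hA.eigenvalues rfl z
    rw [h1]; exact Finset.sum_nonneg fun i _ => mul_nonneg (hlam_lb i) (sq_nonneg _)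
  have hquadub : ∀ z : Fin n → ℝ, z ⬝ᵥ A.mulVec z ≤ ρ * ∑ k, z k ^ 2 := by
    intro z; obtain ⟨w, h1, h2, h3⟩ := spectral_facts A hA hA.eigenvalues rfl z
    rw [h1, h2, Finset.mul_sum]
    exact Finset.sum_le_sum fun i _ => mul_le_mul_of_nonneg_right (hlam_ub i) (sq_nonneg _)
  have hsym : ∀ u w : Fin n → ℝ, u ⬝ᵥ A.mulVec w = w ⬝ᵥ A.mulVec u := by
    intro u w
    have hAt : Aᵀ = A := by
      ext i j
      have h := congrFun (congrFun hA i) j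
      simpa [Matrix.conjTranspose_apply] using h
    rw [dotProduct_mulVec, ← hAt, vecMul_transpose, hAt, dotProduct_comm]
  set q := y ⬝ᵥ A.mulVec y with hqdef
  set p := ∑ k, (y k)^4 with hpdef
  have hq0 : 0 ≤ q := hquad0 y
  have hqρ : q ≤ ρ := by have := hquadub y; rwa [hy, mul_one] at this
  have hAy2 : (A.mulVec y) ⬝ᵥ (A.mulVec y) ≤ ρ * q := by
    obtain ⟨w, h1, h2, h3⟩ := spectral_facts A hA hA.eigenvalues rfl y
    rw [h3, hqdef, h1, Finset.mul_sum]
    apply Finset.sum_le_sum; intro i _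
    have hl := hlam_lb i; have hu := hlam_ub i
    nlinarith [mul_le_mul_of_nonneg_right (mul_le_mul_of_nonneg_right hu hl) (sq_nonneg (w i))]
  have hp_lb : 1 ≤ (n:ℝ) * p := by
    have h := sq_sum_le_card_mul_sum_sq (s := (Finset.univ : Finset (Fin n)))
      (f := fun k => (y k)^2)
    simp only [hy, one_pow, Finset.card_univ, Fintype.card_fin] at h
    calc (1:ℝ) ≤ (n:ℝ) * ∑ k, ((y k)^2)^2 := by exact_mod_cast h
      _ = (n:ℝ) * p := by rw [hpdef]; congr 1; exact Finset.sum_congr rfl fun k _ => by ring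
  have hp_ub : p ≤ 1 := by
    have h := Finset.sum_sq_le_sq_sum_of_nonneg
      (s := (Finset.univ : Finset (Fin n))) (f := fun k => (y k)^2)
      (fun i _ => sq_nonneg _)
    simp only [hy, one_pow] at h
    calc p = ∑ k, ((y k)^2)^2 := Finset.sum_congr rfl fun k _ => by ring
      _ ≤ 1 := h
  -- scaled tangent conditions
  have tangentN : ∀ v : Fin n → ℝ, 0 < ∑ k, (v k)^2 → (∑ k, y k * v k) = 0 →
      (y ⬝ᵥ A.mulVec v + 2*β*∑ k, (y k)^3 * v k = 0) ∧
      (0 ≤ v ⬝ᵥ A.mulVec v - q * ∑ k, (v k)^2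
        + β*(6*∑ k, (y k)^2*(v k)^2 - 2*p*∑ k, (v k)^2)) := by
    intro v hv0 hvy
    set s := ∑ k, (v k)^2 with hs
    set c : ℝ := (Real.sqrt s)⁻¹ with hc
    have hsqrt : 0 < Real.sqrt s := Real.sqrt_pos.mpr hv0
    have hc0 : 0 < c := inv_pos.mpr hsqrt
    have hc2 : c^2 * s = 1 := by
      rw [hc, ← Real.sq_sqrt hv0.le]
      field_simp
      rw [Real.sqrt_sq hsqrt.le]
    set v' : Fin n → ℝ := c • v with hv'
    have hv'app : ∀ k, v' k = c * v k := fun k => rfl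
    have hv'sq : ∑ k, (v' k)^2 = 1 := by
      simp only [hv'app]
      calc ∑ k, (c * v k)^2 = c^2 * ∑ k, (v k)^2 := by
            rw [Finset.mul_sum]; exact Finset.sum_congr rfl fun k _ => by ring
        _ = 1 := hc2
    have hv'y : ∑ k, y k * v' k = 0 := by
      simp only [hv'app]
      calc ∑ k, y k * (c * v k) = c * ∑ k, y k * v k := by
            rw [Finset.mul_sum]; exact Finset.sum_congr rfl fun k _ => by ring
        _ = 0 := by rw [hvy, mul_zero]
    obtain ⟨hFO, hSO⟩ := tangent_conds A hsym β f hf y hy hmin v' hv'sq hv'y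
    have e0 : A.mulVec v' = c • A.mulVec v := by rw [hv', mulVec_smul]
    have e1 : y ⬝ᵥ A.mulVec v' = c * (y ⬝ᵥ A.mulVec v) := by
      rw [e0, dotProduct_smul, smul_eq_mul]
    have e2 : v' ⬝ᵥ A.mulVec v' = c^2 * (v ⬝ᵥ A.mulVec v) := by
      rw [e0, hv', smul_dotProduct, dotProduct_smul, smul_eq_mul, smul_eq_mul]; ring
    have e3 : ∑ k, (y k)^3 * v' k = c * ∑ k, (y k)^3 * v k := by
      simp only [hv'app]
      rw [Finset.mul_sum]; exact Finset.sum_congr rfl fun k _ => by ring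
    have e4 : ∑ k, (y k)^2 * (v' k)^2 = c^2 * ∑ k, (y k)^2 * (v k)^2 := by
      simp only [hv'app]
      rw [Finset.mul_sum]; exact Finset.sum_congr rfl fun k _ => by ring
    constructor
    · rw [e1, e3] at hFO
      have : c * (y ⬝ᵥ A.mulVec v + 2*β*∑ k, (y k)^3 * v k) = 0 := by linarith [hFO]
      rcases mul_eq_zero.mp this with h | h
      · exact absurd h (ne_of_gt hc0)
      · exact h
    · rw [e2, e4] at hSO
      have hX : 0 ≤ s * (c^2 * (v ⬝ᵥ A.mulVec v) - q
          + β*(6*(c^2*∑ k, (y k)^2*(v k)^2) - 2*p)) := by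
        exact mul_nonneg hv0.le hSO
      have hexp : s * (c^2 * (v ⬝ᵥ A.mulVec v) - q
          + β*(6*(c^2*∑ k, (y k)^2*(v k)^2) - 2*p))
          = v ⬝ᵥ A.mulVec v - q*s + β*(6*∑ k, (y k)^2*(v k)^2 - 2*p*s) := by
        have h1 : s * c^2 = 1 := by linarith [hc2, mul_comm s (c^2)]
        linear_combination ((v ⬝ᵥ A.mulVec v) + 6*β*∑ k, (y k)^2*(v k)^2) * h1
      rw [hexp] at hX
      exact hX

  -- all coordinates nonzero
  have hC3 : ∀ k, y k ≠ 0 := by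
    intro k hk0
    set v : Fin n → ℝ := Pi.single k 1 with hv
    have hvsq : ∑ j, (v j)^2 = 1 := by
      simp [hv, Pi.single_apply, apply_ite (· ^ (2:ℕ))]
    have hvy : ∑ j, y j * v j = 0 := by
      simp [hv, Pi.single_apply, mul_ite, hk0]
    obtain ⟨_, hSO⟩ := tangentN v (by rw [hvsq]; norm_num) hvy
    have hyv2 : ∑ j, (y j)^2*(v j)^2 = 0 := by
      simp [hv, Pi.single_apply, apply_ite (· ^ (2:ℕ)), mul_ite, hk0]
    have hvAv : v ⬝ᵥ A.mulVec v ≤ ρ := by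
      have := hquadub v; rwa [hvsq, mul_one] at this
    rw [hvsq, hyv2] at hSO
    have h2b : 2*β ≤ (n:ℝ)*ρ := by
      have hb1 : 2*β*p ≤ ρ := by linarith [hSO, hvAv, hq0]
      nlinarith [mul_le_mul_of_nonneg_left hb1 hN0.le, hp_lb, hβpos]
    nlinarith [hβ', hρ0, hβpos, hN2, mul_le_mul_of_nonneg_left h2b hN0.le,
      mul_nonneg (by linarith : (0:ℝ) ≤ (n:ℝ)-2) (mul_nonneg hρ0 (sq_nonneg (n:ℝ))),
      mul_nonneg hρ0 (sq_nonneg (n:ℝ))]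
  have hsqpos : ∀ j, 0 < (y j)^2 :=
    fun j => lt_of_le_of_ne (sq_nonneg _) (Ne.symm (pow_ne_zero 2 (hC3 j)))
  -- Givens rotations
  have givens : ∀ k l : Fin n, k ≠ l →
      ((A.mulVec y k) * y l - (A.mulVec y l) * y k
        + 2*β*((y k)^3*(y l) - (y l)^3*(y k)) = 0) ∧
      ((q + 2*β*p)*((y l)^2 + (y k)^2)
        ≤ ρ*((y l)^2 + (y k)^2) + 12*β*((y k)^2*(y l)^2)) := by
    intro k l hkl
    set v : Fin n → ℝ := fun j => if j = k then y l else if j = l then -(y k) else 0 with hv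
    have hvk : v k = y l := by simp [hv]
    have hvl : v l = -(y k) := by simp [hv, Ne.symm hkl]
    have hvsq : ∑ j, (v j)^2 = (y l)^2 + (y k)^2 := by
      have e : ∀ j, (v j)^2 = v j * (if j = k then y l else if j = l then -(y k) else 0) := by
        intro j; rw [pow_two]
      rw [Finset.sum_congr rfl (fun j _ => e j), pair_sum hkl, hvk, hvl]
      ring
    have hv0 : 0 < ∑ j, (v j)^2 := by
      rw [hvsq]
      linarith [hsqpos l, sq_nonneg (y k)]
    have hvy : ∑ j, y j * v j = 0 := by
      simp only [hv]
      rw [pair_sum hkl]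
      ring
    obtain ⟨hFO, hSO⟩ := tangentN v hv0 hvy
    constructor
    · have hyAv : y ⬝ᵥ A.mulVec v = (A.mulVec y k) * y l + (A.mulVec y l) * (-(y k)) := by
        rw [hsym y v, dotProduct_comm]
        show ∑ j, (A.mulVec y j) * v j = _
        simp only [hv]
        rw [pair_sum hkl]
      have hy3v : ∑ j, (y j)^3 * v j = (y k)^3 * y l + (y l)^3*(-(y k)) := by
        simp only [hv]; rw [pair_sum hkl]
      rw [hyAv, hy3v] at hFO
      linarith [hFO]
    · have hvAv : v ⬝ᵥ A.mulVec v ≤ ρ*((y l)^2 + (y k)^2) := by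
        have := hquadub v; rwa [hvsq] at this
      have hy2v2 : ∑ j, (y j)^2*(v j)^2
          = (y k)^2*((y l)^2) + (y l)^2*((y k)^2) := by
        simp only [hv]
        have e : ∀ j, (y j)^2*(if j = k then y l else if j = l then -(y k) else 0)^2
            = ((y j)^2*(if j = k then y l else if j = l then -(y k) else 0))
              * (if j = k then y l else if j = l then -(y k) else 0) := by
          intro j; ring
        rw [Finset.sum_congr rfl (fun j _ => e j), pair_sum hkl]
        simp [Ne.symm hkl]
        ring
      rw [hvsq, hy2v2] at hSO
      nlinarith [hSO, hvAv]
  -- minimum coordinate bound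
  have hD1 : ∀ k, 2*β*p - ρ ≤ 12*β*(y k)^2 := by
    intro k
    obtain ⟨l, hlk⟩ := exists_ne k
    have h := (givens k l (Ne.symm hlk)).2
    rcases le_or_gt (2*β*p - ρ) 0 with hc | hc
    · have : 0 ≤ 12*β*(y k)^2 := by positivity
      linarith
    · nlinarith [h, hq0, hsqpos l, sq_nonneg (y k),
        mul_nonneg (mul_nonneg hβpos.le (sq_nonneg (y k))) (sq_nonneg (y k)),
        mul_nonneg hq0 (sq_nonneg (y l)), mul_nonneg hq0 (sq_nonneg (y k))]
  -- first-order condition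
  have hC1 : ∀ j, A.mulVec y j = y j * (q + 2*β*p - 2*β*(y j)^2) := by
    intro j
    have hpair : ∀ k, y k * ((A.mulVec y k) * y j + 2*β*((y k)^3*(y j)))
        = y k * ((A.mulVec y j) * y k + 2*β*((y j)^3*(y k))) := by
      intro k
      by_cases hkj : k = j
      · subst hkj; ring
      · have hg := (givens k j hkj).1
        linear_combination (y k) * hg
    have hsums := Finset.sum_congr rfl (fun k (_ : k ∈ Finset.univ) => hpair k)
    have hqs : q = ∑ k, y k * A.mulVec y k := rfl
    have hL : ∑ k, y k * ((A.mulVec y k) * y j + 2*β*((y k)^3*(y j)))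
        = q * y j + 2*β*p*(y j) := by
      have e : ∀ k, y k * ((A.mulVec y k) * y j + 2*β*((y k)^3*(y j)))
          = (y k * A.mulVec y k) * y j + ((y k)^4) * (2*β*(y j)) := fun k => by ring
      rw [Finset.sum_congr rfl (fun k _ => e k), Finset.sum_add_distrib,
        ← Finset.sum_mul, ← Finset.sum_mul, ← hqs, ← hpdef]
      ring
    have hR : ∑ k, y k * ((A.mulVec y j) * y k + 2*β*((y j)^3*(y k)))
        = A.mulVec y j + 2*β*(y j)^3 := by
      have e : ∀ k, y k * ((A.mulVec y j) * y k + 2*β*((y j)^3*(y k)))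
          = (y k)^2 * (A.mulVec y j + 2*β*(y j)^3) := fun k => by ring
      rw [Finset.sum_congr rfl (fun k _ => e k), ← Finset.sum_mul, hy, one_mul]
    rw [hL, hR] at hsums
    linarith [hsums]
  -- sum identities and bounds
  have hexpand : ∑ k, (q + 2*β*p - 2*β*(y k)^2)^2
      = (n:ℝ)*(q+2*β*p)^2 - 4*β*(q+2*β*p) + 4*β^2*p := by
    have e : ∀ k, (q + 2*β*p - 2*β*(y k)^2)^2
        = ((q+2*β*p)^2 - (4*β*(q+2*β*p))*((y k)^2)) + (4*β^2)*((y k)^4) := fun k => by ring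
    rw [Finset.sum_congr rfl (fun k _ => e k), Finset.sum_add_distrib,
      Finset.sum_sub_distrib, ← Finset.mul_sum, ← Finset.mul_sum, hy,
      Finset.sum_const, Finset.card_univ, Fintype.card_fin, nsmul_eq_mul, ← hpdef]
    ring
  have hSsum : ∑ k, (y k)^2 * (q + 2*β*p - 2*β*(y k)^2)^2 ≤ ρ * q := by
    have e : ∀ k, (y k)^2*(q + 2*β*p - 2*β*(y k)^2)^2 = (A.mulVec y k)^2 := by
      intro k; rw [hC1 k]; ring
    rw [Finset.sum_congr rfl (fun k _ => e k)]
    calc ∑ k, (A.mulVec y k)^2 = (A.mulVec y) ⬝ᵥ (A.mulVec y) :=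
          Finset.sum_congr rfl (fun k _ => pow_two (A.mulVec y k))
      _ ≤ ρ * q := hAy2
  have hKEY : (2*β*p - ρ) * (4*β^2*((n:ℝ)*p - 1)) ≤ 12*(n:ℝ)*β*(ρ*q) := by
    have hW0 : 0 ≤ (n:ℝ)*p - 1 := by linarith [hp_lb]
    have hrhs0 : 0 ≤ 12*(n:ℝ)*β*(ρ*q) :=
      mul_nonneg (by positivity) (mul_nonneg hρ0 hq0)
    rcases le_or_gt (2*β*p - ρ) 0 with hc | hc
    · have h1 : 0 ≤ 4*β^2*((n:ℝ)*p-1) := by positivity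
      nlinarith [mul_nonneg (neg_nonneg.mpr hc) h1]
    · have step1 : (2*β*p - ρ) * (∑ k, (q + 2*β*p - 2*β*(y k)^2)^2)
          ≤ 12*β * ∑ k, (y k)^2*(q + 2*β*p - 2*β*(y k)^2)^2 := by
        calc (2*β*p - ρ) * (∑ k, (q + 2*β*p - 2*β*(y k)^2)^2)
            = ∑ k, (2*β*p - ρ) * (q + 2*β*p - 2*β*(y k)^2)^2 := Finset.mul_sum _ _ _
          _ ≤ ∑ k, 12*β*((y k)^2*(q + 2*β*p - 2*β*(y k)^2)^2) := by
              apply Finset.sum_le_sum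
              intro k _
              nlinarith [mul_le_mul_of_nonneg_right (hD1 k)
                (sq_nonneg (q + 2*β*p - 2*β*(y k)^2))]
          _ = 12*β * ∑ k, (y k)^2*(q + 2*β*p - 2*β*(y k)^2)^2 := (Finset.mul_sum _ _ _).symm
      have step2 : 4*β^2*((n:ℝ)*p - 1) ≤ (n:ℝ) * ∑ k, (q + 2*β*p - 2*β*(y k)^2)^2 := by
        rw [hexpand]
        nlinarith [sq_nonneg ((n:ℝ)*(q+2*β*p) - 2*β), hN0]
      calc (2*β*p - ρ) * (4*β^2*((n:ℝ)*p - 1))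
          ≤ (2*β*p - ρ) * ((n:ℝ) * ∑ k, (q + 2*β*p - 2*β*(y k)^2)^2) :=
            mul_le_mul_of_nonneg_left step2 hc.le
        _ = (n:ℝ) * ((2*β*p - ρ) * ∑ k, (q + 2*β*p - 2*β*(y k)^2)^2) := by ring
        _ ≤ (n:ℝ) * (12*β * ∑ k, (y k)^2*(q + 2*β*p - 2*β*(y k)^2)^2) :=
            mul_le_mul_of_nonneg_left step1 hN0.le
        _ ≤ (n:ℝ) * (12*β*(ρ*q)) := by
            refine mul_le_mul_of_nonneg_left ?_ hN0.le
            exact mul_le_mul_of_nonneg_left hSsum (by positivity)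
        _ = 12*(n:ℝ)*β*(ρ*q) := by ring
  -- numeric combination
  have hNρ : (n:ℝ)*ρ < β := by
    nlinarith [hβ', hβpos, hρ0, hN2, mul_pos (mul_pos hN0 hN0) hβpos,
      mul_nonneg (by linarith : (0:ℝ) ≤ (n:ℝ)-1) (mul_pos hβpos hN0).le,
      mul_pos hN0 hN0]
  have hNd : β < (n:ℝ)*(2*β*p - ρ) := by
    have hW0 : 0 ≤ (n:ℝ)*p - 1 := by linarith [hp_lb]
    nlinarith [hNρ, mul_nonneg hβpos.le hW0]
  have htd : 18*(n:ℝ)*β*((n:ℝ)*p - 1) * β ≤ 54*(n:ℝ)^3*ρ*q := by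
    have hW0 : 0 ≤ (n:ℝ)*p - 1 := by linarith [hp_lb]
    have h6 : (0:ℝ) ≤ 36*(n:ℝ)*β^2*((n:ℝ)*p-1) := by positivity
    have h7 := mul_le_mul_of_nonneg_left hNd.le h6
    have h8 := mul_le_mul_of_nonneg_left hKEY (by positivity : (0:ℝ) ≤ 9*(n:ℝ)*(n:ℝ))
    have h5 : 18*(n:ℝ)*β*((n:ℝ)*p-1) * β * (2*β) ≤ 54*(n:ℝ)^3*ρ*q*(2*β) := by
      nlinarith [h7, h8]
    have h2β : (0:ℝ) < 2*β := by linarith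
    exact le_of_mul_le_mul_right h5 h2β
  have haux3 : (18*(n:ℝ)^2*q*β + 54*(n:ℝ)^3*ρ*q) * (6*(n:ℝ)^3) ≤ β^2 * (6*(n:ℝ)^3) := by
    nlinarith [mul_nonneg (sub_nonneg.mpr hqρ)
        (mul_nonneg (by positivity : (0:ℝ) ≤ 108*(n:ℝ)^5) hβpos.le),
      mul_le_mul_of_nonneg_left hβ'.le
        (mul_nonneg (by positivity : (0:ℝ) ≤ 6*(n:ℝ)^2) hβpos.le),
      mul_nonneg (sub_nonneg.mpr hqρ)
        (mul_nonneg (by positivity : (0:ℝ) ≤ 324*(n:ℝ)^6) hρ0),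
      mul_self_le_mul_self (mul_nonneg (by positivity : (0:ℝ) ≤ 18*(n:ℝ)^3) hρ0) hβ'.le,
      mul_nonneg (mul_nonneg (by linarith : (0:ℝ) ≤ (n:ℝ)-2) hN0.le) (sq_nonneg β),
      mul_nonneg (by linarith : (0:ℝ) ≤ (n:ℝ)-2) (sq_nonneg β)]
  have haux2 : 18*(n:ℝ)^2*q*β + 54*(n:ℝ)^3*ρ*q ≤ β^2 :=
    le_of_mul_le_mul_right haux3 (by positivity)
  have hMβ : (18*(n:ℝ)^2*q + 18*(n:ℝ)*β*((n:ℝ)*p-1))*β ≤ β^2 := by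
    nlinarith [htd, haux2]
  have hM : 18*(n:ℝ)^2*q + 18*(n:ℝ)*β*((n:ℝ)*p-1) ≤ β := by
    nlinarith [hMβ, hβpos]
  -- sInf bounds
  have hbdd : ∀ x ∈ f '' {w : Fin n → ℝ | ∑ k, w k ^ 2 = 1}, β/(2*(n:ℝ)) ≤ x := by
    rintro x ⟨w, hwS, rfl⟩
    have hw1 : ∑ k, w k ^2 = 1 := hwS
    have hq' : 0 ≤ w ⬝ᵥ A.mulVec w := hquad0 w
    have hp' : 1 ≤ (n:ℝ) * ∑ k, (w k)^4 := by
      have h := sq_sum_le_card_mul_sum_sq (s := (Finset.univ : Finset (Fin n)))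
        (f := fun k => (w k)^2)
      simp only [hw1, one_pow, Finset.card_univ, Fintype.card_fin] at h
      calc (1:ℝ) ≤ (n:ℝ) * ∑ k, ((w k)^2)^2 := by exact_mod_cast h
        _ = (n:ℝ) * ∑ k, (w k)^4 := by
            congr 1; exact Finset.sum_congr rfl fun k _ => by ring
    have hx : 1/(n:ℝ) ≤ ∑ k, (w k)^4 := by
      rw [div_le_iff₀ hN0]; linarith [hp']
    have hP : β/(2*(n:ℝ)) ≤ β/2 * ∑ k, (w k)^4 := by
      calc β/(2*(n:ℝ)) = β/2 * (1/(n:ℝ)) := by ring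
        _ ≤ β/2 * ∑ k, (w k)^4 := mul_le_mul_of_nonneg_left hx (by positivity)
    rw [hf]
    simp only
    linarith [hq', hP]
  have hmem : f y ∈ f '' {w : Fin n → ℝ | ∑ k, w k ^ 2 = 1} := ⟨y, hy, rfl⟩
  have hmlb : β/(2*(n:ℝ)) ≤ sInf (f '' {w : Fin n → ℝ | ∑ k, w k ^ 2 = 1}) :=
    le_csInf ⟨f y, hmem⟩ hbdd
  -- f y upper bound
  have hfyval : f y = (1/2)*q + (β/2)*p := by rw [hf]
  have h36 : (0:ℝ) < 36*(n:ℝ)^2 := by positivity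
  have hfyb : f y ≤ β/(2*(n:ℝ)) + β/(36*(n:ℝ)^2) := by
    rw [hfyval]
    have expand : (β/(2*(n:ℝ)) + β/(36*(n:ℝ)^2))*(36*(n:ℝ)^2) = 18*(n:ℝ)*β + β := by
      field_simp
      ring
    have key : ((1/2)*q + (β/2)*p)*(36*(n:ℝ)^2)
        ≤ (β/(2*(n:ℝ)) + β/(36*(n:ℝ)^2))*(36*(n:ℝ)^2) := by
      rw [expand]
      nlinarith [hM]
    exact le_of_mul_le_mul_right key h36
  have hrhs : β/(36*(n:ℝ)^2) = (1/(18*(n:ℝ)))*(β/(2*(n:ℝ))) := by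
    rw [div_mul_div_comm, one_mul]
    congr 1
    ring
  have hfin : (1/(18*(n:ℝ)))*(β/(2*(n:ℝ)))
      ≤ (1/(18*(n:ℝ)))*sInf (f '' {w : Fin n → ℝ | ∑ k, w k ^ 2 = 1}) :=
    mul_le_mul_of_nonneg_left hmlb (by positivity)
  linarith [hfyb, hmlb, hfin, hrhs.le, hrhs.ge]
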